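/- Every 4-point configuration in R^2 in which not all four points are collinear is reconstructible from areas up to the equi-affine group: if Q_1,...,Q_4 in R^2 have the same multiset of squared signed areas {a_{i,j,k}^2 : 1<=i<j<k<=4} as P_1,...,P_4, then there exist a permutation pi of {1,2,3,4}, a linear map phi with det(phi) = plus-or-minus 1, and a vector v with Q_i = phi(P_{pi(i)} + v) for all i. -/

import Mathlib

/-- Twice the signed area of the triangle `P i`, `P j`, `P k` in the plane. -/
def signedArea {n : ℕ} (P : Fin n → Fin 2 → ℝ) (i j k : Fin n) : ℝ :=
  (P j 0 - P i 0) * (P k 1 - P i 1) - (P j 1 - P i 1) * (P k 0 - P i 0)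

/-- The multiset of squared signed areas of all triangles `i < j < k`. -/
def sqAreaMultiset {n : ℕ} (P : Fin n → Fin 2 → ℝ) : Multiset ℝ :=
  ((Finset.univ : Finset (Fin n × Fin n × Fin n)).filter
      fun p => p.1 < p.2.1 ∧ p.2.1 < p.2.2).val.map
    fun p => signedArea P p.1 p.2.1 p.2.2 ^ 2

/-- The vector of affine-dependency coefficients of four points in the plane. -/
def cvec (R : Fin 4 → Fin 2 → ℝ) : Fin 4 → ℝ :=
  ![-(signedArea R 1 2 3), signedArea R 0 2 3, -(signedArea R 0 1 3), signedArea R 0 1 2]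

theorem cvec_sum (R : Fin 4 → Fin 2 → ℝ) :
    cvec R 0 + cvec R 1 + cvec R 2 + cvec R 3 = 0 := by
  simp [cvec, signedArea]; ring

theorem cvec_pt (R : Fin 4 → Fin 2 → ℝ) (x : Fin 2) :
    cvec R 0 * R 0 x + cvec R 1 * R 1 x + cvec R 2 * R 2 x + cvec R 3 * R 3 x = 0 := by
  fin_cases x <;> simp [cvec, signedArea] <;> ring

theorem sa_sq (R : Fin 4 → Fin 2 → ℝ) (p q r s : Fin 4) (h1 : p ≠ q) (h2 : p ≠ r)
    (h3 : q ≠ r) (h4 : s ≠ p) (h5 : s ≠ q) (h6 : s ≠ r) :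
    (signedArea R p q r) ^ 2 = (cvec R s) ^ 2 := by
  fin_cases p <;> fin_cases q <;> fin_cases r <;> fin_cases s <;>
    simp_all [cvec, signedArea] <;> ring

theorem sqArea_eq (R : Fin 4 → Fin 2 → ℝ) :
    sqAreaMultiset R = Multiset.map (fun i => (cvec R i) ^ 2) Finset.univ.val := by
  have hf : ((Finset.univ : Finset (Fin 4 × Fin 4 × Fin 4)).filter
      fun p => p.1 < p.2.1 ∧ p.2.1 < p.2.2) =
      ({(0,1,2),(0,1,3),(0,2,3),(1,2,3)} : Finset (Fin 4 × Fin 4 × Fin 4)) := by decide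
  rw [sqAreaMultiset, hf]
  rw [show (Finset.univ.val : Multiset (Fin 4)) = {0,1,2,3} by decide]
  rw [show (({(0,1,2),(0,1,3),(0,2,3),(1,2,3)} : Finset (Fin 4 × Fin 4 × Fin 4)).val : Multiset _)
      = {(0,1,2),(0,1,3),(0,2,3),(1,2,3)} by decide]
  simp [cvec]
  have : ∀ a b c d : ℝ, a ::ₘ b ::ₘ c ::ₘ ({d} : Multiset ℝ) = d ::ₘ c ::ₘ b ::ₘ {a} := by
    intro a b c d
    show ((([a,b,c,d] : List ℝ) : Multiset ℝ)) = (([d,c,b,a] : List ℝ) : Multiset ℝ)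
    exact Multiset.coe_eq_coe.mpr ([a,b,c,d].reverse_perm).symm
  exact this _ _ _ _

theorem exists_comp_perm {n : ℕ} (f g : Fin n → ℝ)
    (h : Multiset.map f Finset.univ.val = Multiset.map g Finset.univ.val) :
    ∃ σ : Equiv.Perm (Fin n), ∀ i, g i = f (σ i) := by
  classical
  set σf := Tuple.sort f
  set σg := Tuple.sort g
  have key : f ∘ σf = g ∘ σg := by
    have hperm : (List.ofFn (f ∘ σf)).Perm (List.ofFn (g ∘ σg)) := by
      rw [← Multiset.coe_eq_coe, ← Fin.univ_val_map, ← Fin.univ_val_map]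
      calc Multiset.map (f ∘ σf) Finset.univ.val
          = Multiset.map f (Multiset.map σf Finset.univ.val) := by rw [Multiset.map_map]
        _ = Multiset.map f Finset.univ.val := by
            congr 1
            rw [show Multiset.map σf Finset.univ.val = (Finset.univ.map σf.toEmbedding).val from rfl,
              Finset.map_univ_equiv]
        _ = Multiset.map g Finset.univ.val := h
        _ = Multiset.map g (Multiset.map σg Finset.univ.val) := by
            congr 1
            rw [show Multiset.map σg Finset.univ.val = (Finset.univ.map σg.toEmbedding).val from rfl,
              Finset.map_univ_equiv]
        _ = Multiset.map (g ∘ σg) Finset.univ.val := by rw [Multiset.map_map]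
    exact List.ofFn_injective <| hperm.eq_of_sortedLE
      (Tuple.monotone_sort f).sortedLE_ofFn (Tuple.monotone_sort g).sortedLE_ofFn
  refine ⟨σg.symm.trans σf, fun i => ?_⟩
  have := congrFun key (σg.symm i)
  simpa using this.symm

theorem sign_lemma (s t : Fin 4 → ℝ)
    (hs : s 0 + s 1 + s 2 + s 3 = 0) (ht : t 0 + t 1 + t 2 + t 3 = 0)
    (h : ∀ i, t i = s i ∨ t i = -s i) :
    ∃ (τ : Equiv.Perm (Fin 4)) (ε : ℝ), (ε = 1 ∨ ε = -1) ∧ ∀ i, t i = ε * s (τ i) := by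
  rcases h 0 with h0 | h0 <;> rcases h 1 with h1 | h1 <;>
    rcases h 2 with h2 | h2 <;> rcases h 3 with h3 | h3
  · exact ⟨1, 1, Or.inl rfl, by intro k; fin_cases k <;> simp <;> linarith⟩
  · exact ⟨1, 1, Or.inl rfl, by intro k; fin_cases k <;> simp <;> linarith⟩
  · exact ⟨1, 1, Or.inl rfl, by intro k; fin_cases k <;> simp <;> linarith⟩
  · exact ⟨Equiv.swap 2 3, 1, Or.inl rfl, by
      intro k; fin_cases k <;> simp [Equiv.swap_apply_def] <;> linarith⟩
  · exact ⟨1, 1, Or.inl rfl, by intro k; fin_cases k <;> simp <;> linarith⟩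
  · exact ⟨Equiv.swap 1 3, 1, Or.inl rfl, by
      intro k; fin_cases k <;> simp [Equiv.swap_apply_def] <;> linarith⟩
  · exact ⟨Equiv.swap 1 2, 1, Or.inl rfl, by
      intro k; fin_cases k <;> simp [Equiv.swap_apply_def] <;> linarith⟩
  · exact ⟨1, -1, Or.inr rfl, by intro k; fin_cases k <;> simp <;> linarith⟩
  · exact ⟨1, 1, Or.inl rfl, by intro k; fin_cases k <;> simp <;> linarith⟩
  · exact ⟨Equiv.swap 0 3, 1, Or.inl rfl, by
      intro k; fin_cases k <;> simp [Equiv.swap_apply_def] <;> linarith⟩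
  · exact ⟨Equiv.swap 0 2, 1, Or.inl rfl, by
      intro k; fin_cases k <;> simp [Equiv.swap_apply_def] <;> linarith⟩
  · exact ⟨1, -1, Or.inr rfl, by intro k; fin_cases k <;> simp <;> linarith⟩
  · exact ⟨Equiv.swap 0 1, 1, Or.inl rfl, by
      intro k; fin_cases k <;> simp [Equiv.swap_apply_def] <;> linarith⟩
  · exact ⟨1, -1, Or.inr rfl, by intro k; fin_cases k <;> simp <;> linarith⟩
  · exact ⟨1, -1, Or.inr rfl, by intro k; fin_cases k <;> simp <;> linarith⟩
  · exact ⟨1, -1, Or.inr rfl, by intro k; fin_cases k <;> simp <;> linarith⟩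

theorem line_lemma (v w : Fin 2 → ℝ) (hv : v ≠ 0) (hdet : v 0 * w 1 - v 1 * w 0 = 0) :
    ∃ t : ℝ, w = t • v := by
  by_cases h0 : v 0 = 0
  · have h1 : v 1 ≠ 0 := by
      intro h1; apply hv; funext x; revert x; rw [Fin.forall_fin_two]; exact ⟨h0, h1⟩
    refine ⟨w 1 / v 1, funext ?_⟩
    rw [Fin.forall_fin_two]
    constructor <;> simp only [Pi.smul_apply, smul_eq_mul]
    · have hw0 : w 0 = 0 := by
        have : v 1 * w 0 = 0 := by linear_combination -hdet + w 1 * h0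
        rcases mul_eq_zero.mp this with h | h
        · exact absurd h h1
        · exact h
      rw [hw0, h0]; ring
    · field_simp
  · refine ⟨w 0 / v 0, funext ?_⟩
    rw [Fin.forall_fin_two]
    constructor <;> simp only [Pi.smul_apply, smul_eq_mul]
    · field_simp
    · field_simp
      linear_combination hdet

theorem collinear_of_areas (R : Fin 4 → Fin 2 → ℝ)
    (h012 : signedArea R 0 1 2 = 0) (h013 : signedArea R 0 1 3 = 0)
    (h023 : signedArea R 0 2 3 = 0) :
    Collinear ℝ (Set.range R) := by
  simp only [signedArea] at h012 h013 h023
  rw [collinear_iff_of_mem (Set.mem_range_self (0 : Fin 4))]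
  by_cases hb : R 1 = R 0
  · by_cases hc : R 2 = R 0
    · refine ⟨R 3 - R 0, ?_⟩
      rintro p ⟨i, rfl⟩
      fin_cases i
      · exact ⟨0, by simp⟩
      · exact ⟨0, by simp [hb]⟩
      · exact ⟨0, by simp [hc]⟩
      · exact ⟨1, by simp⟩
    · refine ⟨R 2 - R 0, ?_⟩
      have hv : R 2 - R 0 ≠ 0 := sub_ne_zero.mpr hc
      obtain ⟨t, ht⟩ := line_lemma (R 2 - R 0) (R 3 - R 0) hv (by
        simp only [Pi.sub_apply]; linear_combination h023)
      rintro p ⟨i, rfl⟩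
      fin_cases i
      · exact ⟨0, by simp⟩
      · exact ⟨0, by simp [hb]⟩
      · exact ⟨1, by simp⟩
      · exact ⟨t, by rw [← ht]; simp⟩
  · refine ⟨R 1 - R 0, ?_⟩
    have hv : R 1 - R 0 ≠ 0 := sub_ne_zero.mpr hb
    obtain ⟨t2, ht2⟩ := line_lemma (R 1 - R 0) (R 2 - R 0) hv (by
      simp only [Pi.sub_apply]; linear_combination h012)
    obtain ⟨t3, ht3⟩ := line_lemma (R 1 - R 0) (R 3 - R 0) hv (by
      simp only [Pi.sub_apply]; linear_combination h013)
    rintro p ⟨i, rfl⟩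
    fin_cases i
    · exact ⟨0, by simp⟩
    · exact ⟨1, by simp⟩
    · exact ⟨t2, by rw [← ht2]; simp⟩
    · exact ⟨t3, by rw [← ht3]; simp⟩

theorem geom (P' Q : Fin 4 → Fin 2 → ℝ) (u : Fin 4 → ℝ) (a b c m : Fin 4)
    (hall : ∀ i : Fin 4, i = a ∨ i = b ∨ i = c ∨ i = m)
    (hsum : u a + u b + u c + u m = 0)
    (hP : ∀ x, u a * P' a x + u b * P' b x + u c * P' c x + u m * P' m x = 0)
    (hQ : ∀ x, u a * Q a x + u b * Q b x + u c * Q c x + u m * Q m x = 0)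
    (hum : u m ≠ 0)
    (hM : signedArea P' a b c ≠ 0)
    (hdet : signedArea Q a b c = signedArea P' a b c ∨
            signedArea Q a b c = - signedArea P' a b c) :
    ∃ (φ : (Fin 2 → ℝ) ≃ₗ[ℝ] (Fin 2 → ℝ)) (v : Fin 2 → ℝ),
      (LinearMap.det (φ : (Fin 2 → ℝ) →ₗ[ℝ] (Fin 2 → ℝ)) = 1 ∨
       LinearMap.det (φ : (Fin 2 → ℝ) →ₗ[ℝ] (Fin 2 → ℝ)) = -1) ∧
      ∀ i, Q i = φ (P' i + v) := by
  classical
  set M : Matrix (Fin 2) (Fin 2) ℝ :=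
    Matrix.of ![![P' b 0 - P' a 0, P' c 0 - P' a 0], ![P' b 1 - P' a 1, P' c 1 - P' a 1]] with hMdef
  set N : Matrix (Fin 2) (Fin 2) ℝ :=
    Matrix.of ![![Q b 0 - Q a 0, Q c 0 - Q a 0], ![Q b 1 - Q a 1, Q c 1 - Q a 1]] with hNdef
  have hMdet : M.det = signedArea P' a b c := by
    simp [hMdef, Matrix.det_fin_two, signedArea]; ring
  have hNdet : N.det = signedArea Q a b c := by
    simp [hNdef, Matrix.det_fin_two, signedArea]; ring
  have hMdet0 : M.det ≠ 0 := by rw [hMdet]; exact hM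
  have hMunit : IsUnit M.det := isUnit_iff_ne_zero.mpr hMdet0
  set A : Matrix (Fin 2) (Fin 2) ℝ := N * M⁻¹ with hAdef
  have hAdet : A.det = 1 ∨ A.det = -1 := by
    have : A.det = N.det * M.det⁻¹ := by
      rw [hAdef, Matrix.det_mul, Matrix.det_nonsing_inv, Ring.inverse_eq_inv']
    rcases hdet with hd | hd
    · left; rw [this, hNdet, hd, ← hMdet]; field_simp
    · right; rw [this, hNdet, hd, ← hMdet]; field_simp
  have hAunit : IsUnit A.det := by rcases hAdet with hd | hd <;> rw [hd] <;> norm_num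
  letI instA : Invertible A := A.invertibleOfIsUnitDet hAunit
  refine ⟨A.toLinearEquiv' instA, A⁻¹.mulVec (Q a) - P' a, ?_, ?_⟩
  · have hcoe : ((A.toLinearEquiv' instA : (Fin 2 → ℝ) ≃ₗ[ℝ] (Fin 2 → ℝ)) :
        (Fin 2 → ℝ) →ₗ[ℝ] (Fin 2 → ℝ)) = Matrix.toLin' A := rfl
    rw [hcoe, LinearMap.det_toLin']
    exact hAdet
  · have happ : ∀ w : Fin 2 → ℝ, (A.toLinearEquiv' instA) w = A.mulVec w := by
      intro w; rfl
    have hAA : A.mulVec (A⁻¹.mulVec (Q a)) = Q a := by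
      rw [Matrix.mulVec_mulVec, Matrix.mul_nonsing_inv A hAunit, Matrix.one_mulVec]
    have key : ∀ (i : Fin 4) (w : Fin 2 → ℝ),
        (∀ x, P' i x - P' a x = M.mulVec w x) →
        (∀ x, Q i x - Q a x = N.mulVec w x) →
        Q i = (A.toLinearEquiv' instA) (P' i + (A⁻¹.mulVec (Q a) - P' a)) := by
      intro i w hPw hQw
      rw [happ]
      have h1 : P' i + (A⁻¹.mulVec (Q a) - P' a) = (fun x => P' i x - P' a x) + A⁻¹.mulVec (Q a) := by
        funext x; simp only [Pi.add_apply, Pi.sub_apply]; ring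
      rw [h1, Matrix.mulVec_add, hAA]
      funext x
      have h2 : (fun x => P' i x - P' a x) = M.mulVec w := funext hPw
      rw [h2, Matrix.mulVec_mulVec, hAdef, Matrix.mul_assoc,
        Matrix.nonsing_inv_mul M hMunit, Matrix.mul_one]
      simp only [Pi.add_apply]
      linarith [hQw x]
    intro i
    rcases hall i with hi | hi | hi | hi <;> rw [hi]
    · exact key a 0 (by intro x; simp [Matrix.mulVec_zero]) (by intro x; simp [Matrix.mulVec_zero])
    · refine key b ![1, 0] ?_ ?_ <;> intro x <;> fin_cases x <;>
        simp [hMdef, hNdef, Matrix.mulVec, dotProduct, Fin.sum_univ_two]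
    · refine key c ![0, 1] ?_ ?_ <;> intro x <;> fin_cases x <;>
        simp [hMdef, hNdef, Matrix.mulVec, dotProduct, Fin.sum_univ_two]
    · refine key m ![-(u b)/u m, -(u c)/u m] ?_ ?_
      · intro x
        fin_cases x <;>
          simp only [hMdef, Matrix.mulVec, dotProduct, Fin.sum_univ_two,
            Matrix.of_apply, Matrix.cons_val', Matrix.cons_val_zero, Matrix.cons_val_one,
            Matrix.head_cons, Matrix.empty_val', Matrix.cons_val_fin_one, Matrix.head_fin_const] <;>
          field_simp
        · simp only [Fin.zero_eta, Fin.mk_one, Matrix.cons_val_zero, Matrix.cons_val_one]; linear_combination hP 0 - P' a 0 * hsum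
        · simp only [Fin.zero_eta, Fin.mk_one, Matrix.cons_val_zero, Matrix.cons_val_one]; linear_combination hP 1 - P' a 1 * hsum
      · intro x
        fin_cases x <;>
          simp only [hNdef, Matrix.mulVec, dotProduct, Fin.sum_univ_two,
            Matrix.of_apply, Matrix.cons_val', Matrix.cons_val_zero, Matrix.cons_val_one,
            Matrix.head_cons, Matrix.empty_val', Matrix.cons_val_fin_one, Matrix.head_fin_const] <;>
          field_simp
        · simp only [Fin.zero_eta, Fin.mk_one, Matrix.cons_val_zero, Matrix.cons_val_one]; linear_combination hQ 0 - Q a 0 * hsum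
        · simp only [Fin.zero_eta, Fin.mk_one, Matrix.cons_val_zero, Matrix.cons_val_one]; linear_combination hQ 1 - Q a 1 * hsum

theorem stmt14 (P Q : Fin 4 → Fin 2 → ℝ)
    (hncol : ¬ Collinear ℝ (Set.range P))
    (h : sqAreaMultiset P = sqAreaMultiset Q) :
    ∃ (π : Equiv.Perm (Fin 4)) (φ : (Fin 2 → ℝ) ≃ₗ[ℝ] (Fin 2 → ℝ)) (v : Fin 2 → ℝ),
      (LinearMap.det (φ : (Fin 2 → ℝ) →ₗ[ℝ] (Fin 2 → ℝ)) = 1 ∨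
       LinearMap.det (φ : (Fin 2 → ℝ) →ₗ[ℝ] (Fin 2 → ℝ)) = -1) ∧
      ∀ i, Q i = φ (P (π i) + v) := by
  classical
  have hmult : Multiset.map (fun i => (cvec P i) ^ 2) Finset.univ.val
      = Multiset.map (fun i => (cvec Q i) ^ 2) Finset.univ.val := by
    rw [← sqArea_eq, ← sqArea_eq, h]
  obtain ⟨σ0, hσ0⟩ := exists_comp_perm _ _ hmult
  set s : Fin 4 → ℝ := fun i => cvec P (σ0 i) with hsdef
  have hsq : ∀ i, cvec Q i = s i ∨ cvec Q i = -(s i) := by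
    intro i
    have hfac : (cvec Q i - s i) * (cvec Q i + s i) = 0 := by
      have := hσ0 i
      simp only [hsdef] at *
      linear_combination this
    rcases mul_eq_zero.mp hfac with hf | hf
    · left; linarith [sub_eq_zero.mp hf]
    · right; linarith [hf]
  have hsums : s 0 + s 1 + s 2 + s 3 = 0 := by
    have hcomp := Equiv.sum_comp σ0 (cvec P)
    rw [Fin.sum_univ_four, Fin.sum_univ_four] at hcomp
    have := cvec_sum P
    simp only [hsdef]
    linarith
  obtain ⟨τ, ε, hε, hall⟩ := sign_lemma s (cvec Q) hsums (cvec_sum Q) hsq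
  set σ : Equiv.Perm (Fin 4) := τ.trans σ0 with hσdef
  set u : Fin 4 → ℝ := fun i => cvec P (σ i) with hudef
  have hu : ∀ i, cvec Q i = ε * u i := fun i => hall i
  have hε2 : ε * ε = 1 := by rcases hε with he | he <;> rw [he] <;> norm_num
  -- sums for u
  have husum : u 0 + u 1 + u 2 + u 3 = 0 := by
    have hcomp := Equiv.sum_comp σ (cvec P)
    rw [Fin.sum_univ_four, Fin.sum_univ_four] at hcomp
    have := cvec_sum P
    simp only [hudef]
    linarith
  have huP : ∀ x, u 0 * P (σ 0) x + u 1 * P (σ 1) x + u 2 * P (σ 2) x + u 3 * P (σ 3) x = 0 := by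
    intro x
    have hcomp := Equiv.sum_comp σ (fun j => cvec P j * P j x)
    rw [Fin.sum_univ_four, Fin.sum_univ_four] at hcomp
    have := cvec_pt P x
    simp only [hudef]
    linarith
  have huQ : ∀ x, u 0 * Q 0 x + u 1 * Q 1 x + u 2 * Q 2 x + u 3 * Q 3 x = 0 := by
    intro x
    have h1 := cvec_pt Q x
    have e0 := hu 0; have e1 := hu 1; have e2 := hu 2; have e3 := hu 3
    have : ε * (u 0 * Q 0 x + u 1 * Q 1 x + u 2 * Q 2 x + u 3 * Q 3 x) = 0 := by
      linear_combination h1 - Q 0 x * e0 - Q 1 x * e1 - Q 2 x * e2 - Q 3 x * e3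
    rcases hε with he | he <;> rw [he] at this <;> linarith
  -- nonvanishing
  have hPex : ∃ j, cvec P j ≠ 0 := by
    by_contra h'
    push_neg at h'
    refine hncol (collinear_of_areas P ?_ ?_ ?_)
    · have := h' 3; simpa [cvec] using this
    · have := h' 2; simpa [cvec, neg_eq_zero] using this
    · have := h' 1; simpa [cvec] using this
  obtain ⟨j, hj⟩ := hPex
  have hum : u (σ.symm j) ≠ 0 := by
    simp only [hudef, Equiv.apply_symm_apply]
    exact hj
  set P' : Fin 4 → Fin 2 → ℝ := fun i => P (σ i) with hP'def
  -- squared-area matching for an omitted index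
  have harea : ∀ (a b c m : Fin 4), a ≠ b → a ≠ c → b ≠ c → m ≠ a → m ≠ b → m ≠ c →
      u m ≠ 0 → signedArea P' a b c ≠ 0 ∧
      (signedArea Q a b c = signedArea P' a b c ∨
       signedArea Q a b c = - signedArea P' a b c) := by
    intro a b c m hab hac hbc hma hmb hmc hm
    have hinj := σ.injective
    have h1 : (signedArea P' a b c) ^ 2 = (u m) ^ 2 := by
      have : signedArea P' a b c = signedArea P (σ a) (σ b) (σ c) := rfl
      rw [this, hudef]
      exact sa_sq P (σ a) (σ b) (σ c) (σ m)
        (fun hh => hab (hinj hh)) (fun hh => hac (hinj hh)) (fun hh => hbc (hinj hh))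
        (fun hh => hma (hinj hh)) (fun hh => hmb (hinj hh)) (fun hh => hmc (hinj hh))
    have h2 : (signedArea Q a b c) ^ 2 = (u m) ^ 2 := by
      have h3 : (signedArea Q a b c) ^ 2 = (cvec Q m) ^ 2 :=
        sa_sq Q a b c m hab hac hbc hma hmb hmc
      rw [h3, hu m]
      have : (ε * u m) ^ 2 = (ε * ε) * (u m)^2 := by ring
      rw [this, hε2, one_mul]
    constructor
    · intro hz
      rw [hz] at h1
      exact hm (pow_eq_zero_iff (n := 2) (by norm_num) |>.mp (by rw [← h1]; ring))
    · have hfac : (signedArea Q a b c - signedArea P' a b c) *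
          (signedArea Q a b c + signedArea P' a b c) = 0 := by
        linear_combination h2 - h1
      rcases mul_eq_zero.mp hfac with hf | hf
      · left; linarith [sub_eq_zero.mp hf]
      · right; linarith [hf]
  -- case on the position of the nonzero coefficient
  have hmcases : σ.symm j = 0 ∨ σ.symm j = 1 ∨ σ.symm j = 2 ∨ σ.symm j = 3 := by omega
  have main : ∃ (φ : (Fin 2 → ℝ) ≃ₗ[ℝ] (Fin 2 → ℝ)) (v : Fin 2 → ℝ),
      (LinearMap.det (φ : (Fin 2 → ℝ) →ₗ[ℝ] (Fin 2 → ℝ)) = 1 ∨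
       LinearMap.det (φ : (Fin 2 → ℝ) →ₗ[ℝ] (Fin 2 → ℝ)) = -1) ∧
      ∀ i, Q i = φ (P' i + v) := by
    rcases hmcases with hm | hm | hm | hm <;> rw [hm] at hum
    · obtain ⟨hM, hdet⟩ := harea 1 2 3 0 (by decide) (by decide) (by decide)
        (by decide) (by decide) (by decide) hum
      exact geom P' Q u 1 2 3 0 (by intro i; omega)
        (by linarith [husum]) (fun x => by linarith [huP x]) (fun x => by linarith [huQ x])
        hum hM hdet
    · obtain ⟨hM, hdet⟩ := harea 0 2 3 1 (by decide) (by decide) (by decide)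
        (by decide) (by decide) (by decide) hum
      exact geom P' Q u 0 2 3 1 (by intro i; omega)
        (by linarith [husum]) (fun x => by linarith [huP x]) (fun x => by linarith [huQ x])
        hum hM hdet
    · obtain ⟨hM, hdet⟩ := harea 0 1 3 2 (by decide) (by decide) (by decide)
        (by decide) (by decide) (by decide) hum
      exact geom P' Q u 0 1 3 2 (by intro i; omega)
        (by linarith [husum]) (fun x => by linarith [huP x]) (fun x => by linarith [huQ x])
        hum hM hdet
    · obtain ⟨hM, hdet⟩ := harea 0 1 2 3 (by decide) (by decide) (by decide)
        (by decide) (by decide) (by decide) hum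
      exact geom P' Q u 0 1 2 3 (by intro i; omega)
        (by linarith [husum]) (fun x => by linarith [huP x]) (fun x => by linarith [huQ x])
        hum hM hdet
  obtain ⟨φ, v, hdet, hpts⟩ := main
  exact ⟨σ, φ, v, hdet, hpts⟩
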